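/- Let Ω be a bounded smooth domain with β_Ω = 1, 0 < q < 1 < p, pq > 1, and fix τ with (1−q)/q < τ < p − 1. For every Λ > 0 there exists ε̄ = ε̄(τ, Λ) > 0 such that for all ε ∈ (0, ε̄], the function φ_ε(x) = ε(φ_Ω(x) + ε^τ) satisfies −Δφ_ε ≤ φ_ε − φ_ε^p in Ω and ∂φ_ε/∂ν ≤ −λφ_ε^q on ∂Ω for every λ ∈ [0, Λ]; i.e., φ_ε is a subsolution of the problem uniformly in λ ∈ [0,Λ]. -/

import Mathlib

open MeasureTheory Filter Topology

/-- The Laplacian `Δu = ∑ i ∂²u/∂xᵢ²`. -/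
noncomputable def lap {N : ℕ} (u : EuclideanSpace ℝ (Fin N) → ℝ)
    (x : EuclideanSpace ℝ (Fin N)) : ℝ :=
  ∑ i : Fin N,
    fderiv ℝ (fun y => fderiv ℝ u y (EuclideanSpace.single i (1:ℝ))) x
      (EuclideanSpace.single i (1:ℝ))

/-- Lemma `prop:sub`, subsolution part. Assume `β_Ω = 1`,
`0 < q < 1 < p`, `pq > 1`, and `(1−q)/q < τ < p−1`.  For every `Λ > 0` there is
`ε̄ > 0` such that for all `ε ∈ (0, ε̄]` the function `φ_ε = ε(φ_Ω + ε^τ)` satisfies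
`−Δφ_ε ≤ φ_ε − φ_ε^p` in `Ω` and `∂φ_ε/∂ν ≤ −λφ_ε^q` on `∂Ω` for every
`λ ∈ [0, Λ]`. -/
lemma grad_scale {N : ℕ} (φ : EuclideanSpace ℝ (Fin N) → ℝ)
    (x : EuclideanSpace ℝ (Fin N)) (hx : DifferentiableAt ℝ φ x) (ε c : ℝ) :
    gradient (fun y => ε * (φ y + c)) x = ε • gradient φ x := by
  have h1 : fderiv ℝ (fun y => ε * (φ y + c)) x = ε • fderiv ℝ φ x := by
    rw [fderiv_const_mul (hx.add_const c), fderiv_add_const]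
  unfold gradient
  rw [h1]
  exact _root_.map_smul (InnerProductSpace.toDual ℝ (EuclideanSpace ℝ (Fin N))).symm.toLinearEquiv ε _

lemma lap_scale {N : ℕ} (φ : EuclideanSpace ℝ (Fin N) → ℝ)
    (x : EuclideanSpace ℝ (Fin N)) (hx : ContDiffAt ℝ 2 φ x) (ε c : ℝ) :
    lap (fun y => ε * (φ y + c)) x = ε * lap φ x := by
  unfold lap
  rw [Finset.mul_sum]
  refine Finset.sum_congr rfl fun i _ => ?_
  set v := EuclideanSpace.single i (1:ℝ)
  have hev : ∀ᶠ y in 𝓝 x,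
      (fun y => fderiv ℝ (fun z => ε * (φ z + c)) y v) y
        = (fun y => ε * fderiv ℝ φ y v) y := by
    have h2 : ∀ᶠ y in 𝓝 x, ContDiffAt ℝ 2 φ y := hx.eventually (by norm_num)
    filter_upwards [h2] with y hy
    have hd : DifferentiableAt ℝ φ y := hy.differentiableAt (by norm_num)
    simp only [fderiv_const_mul (hd.add_const c), fderiv_add_const,
      ContinuousLinearMap.smul_apply, smul_eq_mul]
  rw [Filter.EventuallyEq.fderiv_eq hev]
  have hg : DifferentiableAt ℝ (fun y => fderiv ℝ φ y v) x := by
    have h3 : ContDiffAt ℝ 1 (fderiv ℝ φ) x := hx.fderiv_right (by norm_num)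
    exact ((ContinuousLinearMap.apply ℝ ℝ v).differentiableAt).comp x
      (h3.differentiableAt (by norm_num))
  rw [fderiv_const_mul hg]
  simp

lemma rpow_small {ε A s : ℝ} (hε : 0 < ε) (hA : 0 < A) (hs : 0 < s)
    (h : ε ≤ A ^ s⁻¹) : ε ^ s ≤ A := by
  calc ε ^ s ≤ (A ^ s⁻¹) ^ s := Real.rpow_le_rpow hε.le h hs.le
    _ = A := by rw [← Real.rpow_mul hA.le, inv_mul_cancel₀ hs.ne', Real.rpow_one]

theorem stmt14 {N : ℕ} (Ω : Set (EuclideanSpace ℝ (Fin N)))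
    (hΩopen : IsOpen Ω) (hΩbd : Bornology.IsBounded Ω) (hΩne : Ω.Nonempty)
    (p q τ : ℝ) (hp : 1 < p) (hq0 : 0 < q) (hq1 : q < 1) (hpq : 1 < p * q)
    (hτ1 : (1 - q) / q < τ) (hτ2 : τ < p - 1)
    -- outer unit normal on ∂Ω
    (ν : EuclideanSpace ℝ (Fin N) → EuclideanSpace ℝ (Fin N))
    -- the principal Dirichlet eigenfunction φ_Ω for β_Ω = 1
    (φΩ : EuclideanSpace ℝ (Fin N) → ℝ)
    (hφC2 : ∀ x ∈ closure Ω, ContDiffAt ℝ 2 φΩ x)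
    (hφcont : ContinuousOn φΩ (closure Ω))
    (heig : ∀ x ∈ Ω, -lap φΩ x = φΩ x)
    (hφpos : ∀ x ∈ Ω, 0 < φΩ x)
    (hφbdry : ∀ x ∈ frontier Ω, φΩ x = 0)
    -- c₁ := min_{∂Ω} (−∂φ_Ω/∂ν) > 0
    (hc₁ : ∃ c₁ > (0:ℝ), ∀ x ∈ frontier Ω,
      c₁ ≤ -(inner ℝ (gradient φΩ x) (ν x) : ℝ)) :
    ∀ Λ > (0:ℝ), ∃ εbar > (0:ℝ), ∀ ε : ℝ, 0 < ε → ε ≤ εbar →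
      (∀ x ∈ Ω,
        -lap (fun y => ε * (φΩ y + ε ^ τ)) x ≤
          ε * (φΩ x + ε ^ τ) - (ε * (φΩ x + ε ^ τ)) ^ p) ∧
      (∀ lam : ℝ, 0 ≤ lam → lam ≤ Λ → ∀ x ∈ frontier Ω,
        (inner ℝ (gradient (fun y => ε * (φΩ y + ε ^ τ)) x) (ν x) : ℝ) ≤
          -lam * (ε * (φΩ x + ε ^ τ)) ^ q) := by
  obtain ⟨c₁, hc₁pos, hc₁'⟩ := hc₁
  intro Λ hΛ
  have hcls : IsCompact (closure Ω) :=
    Metric.isCompact_of_isClosed_isBounded isClosed_closure hΩbd.closure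
  obtain ⟨M, hM⟩ := hcls.bddAbove_image hφcont
  set M₀ : ℝ := max M 0 with hM₀def
  have hM₀ : ∀ x ∈ closure Ω, φΩ x ≤ M₀ := fun x hx =>
    le_trans (hM (Set.mem_image_of_mem φΩ hx)) (le_max_left _ _)
  have hM₀0 : 0 ≤ M₀ := le_max_right _ _
  have hM₁ : (0:ℝ) < M₀ + 1 := by linarith
  have hτ0 : 0 < τ := lt_trans (div_pos (by linarith) hq0) hτ1
  set s₁ : ℝ := p - (1 + τ) with hs₁def
  set s₂ : ℝ := (1 + τ) * q - 1 with hs₂def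
  have hs₁ : 0 < s₁ := by simp only [hs₁def]; linarith
  have hs₂ : 0 < s₂ := by
    have : 1 - q < τ * q := (div_lt_iff₀ hq0).mp hτ1
    simp only [hs₂def]; nlinarith
  set εbar : ℝ := min 1 (min ((((M₀+1):ℝ)^p)⁻¹ ^ s₁⁻¹) ((c₁/Λ) ^ s₂⁻¹)) with hεdef
  have hA1 : (0:ℝ) < (((M₀+1):ℝ)^p)⁻¹ := by positivity
  have hA2 : (0:ℝ) < c₁/Λ := by positivity
  refine ⟨εbar, lt_min one_pos (lt_min (Real.rpow_pos_of_pos hA1 _) (Real.rpow_pos_of_pos hA2 _)), fun ε hε0 hεle => ?_⟩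
  have hε1 : ε ≤ 1 := le_trans hεle (min_le_left _ _)
  have hF2 : ε ^ s₁ * (M₀+1)^p ≤ 1 := by
    have h := rpow_small hε0 hA1 hs₁
      (le_trans hεle (le_trans (min_le_right _ _) (min_le_left _ _)))
    calc ε ^ s₁ * (M₀+1)^p ≤ (((M₀+1):ℝ)^p)⁻¹ * (M₀+1)^p :=
          mul_le_mul_of_nonneg_right h (by positivity)
      _ = 1 := inv_mul_cancel₀ (by positivity)
  have hF3 : Λ * ε ^ s₂ ≤ c₁ := by
    have h := rpow_small hε0 hA2 hs₂
      (le_trans hεle (le_trans (min_le_right _ _) (min_le_right _ _)))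
    calc Λ * ε ^ s₂ ≤ Λ * (c₁/Λ) := mul_le_mul_of_nonneg_left h hΛ.le
      _ = c₁ := by field_simp
  have hετ0 : (0:ℝ) ≤ ε ^ τ := Real.rpow_nonneg hε0.le τ
  have hετ1 : ε ^ τ ≤ 1 := Real.rpow_le_one hε0.le hε1 hτ0.le
  constructor
  · intro x hx
    have hxc : x ∈ closure Ω := subset_closure hx
    rw [lap_scale φΩ x (hφC2 x hxc) ε (ε^τ)]
    have hlapeq : -(ε * lap φΩ x) = ε * φΩ x := by
      rw [← heig x hx]; ring
    rw [hlapeq]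
    have hb0 : 0 ≤ ε * (φΩ x + ε ^ τ) := by
      have := (hφpos x hx).le; positivity
    have hble : ε * (φΩ x + ε ^ τ) ≤ ε * (M₀ + 1) := by
      have := hM₀ x hxc; nlinarith
    have key : (ε * (φΩ x + ε ^ τ)) ^ p ≤ ε * ε ^ τ := by
      calc (ε * (φΩ x + ε ^ τ)) ^ p ≤ (ε * (M₀+1)) ^ p :=
            Real.rpow_le_rpow hb0 hble (by linarith)
        _ = ε ^ p * (M₀+1) ^ p := Real.mul_rpow hε0.le hM₁.le
        _ = ε ^ (1+τ) * (ε ^ s₁ * (M₀+1) ^ p) := by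
            rw [← mul_assoc, ← Real.rpow_add hε0]
            congr 2
            simp only [hs₁def]; ring
        _ ≤ ε ^ (1+τ) * 1 :=
            mul_le_mul_of_nonneg_left hF2 (Real.rpow_nonneg hε0.le _)
        _ = ε * ε ^ τ := by rw [mul_one, Real.rpow_add hε0, Real.rpow_one]
    have : ε * (φΩ x + ε ^ τ) = ε * φΩ x + ε * ε ^ τ := by ring
    linarith [key]
  · intro lam hlam0 hlamΛ x hx
    have hxc : x ∈ closure Ω := frontier_subset_closure hx
    rw [grad_scale φΩ x ((hφC2 x hxc).differentiableAt (by norm_num)) ε (ε^τ),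
      real_inner_smul_left, hφbdry x hx, zero_add]
    have hin : (inner ℝ (gradient φΩ x) (ν x) : ℝ) ≤ -c₁ := by
      have := hc₁' x hx; linarith
    have e1 : ε * ε ^ τ = ε ^ (1+τ) := by rw [Real.rpow_add hε0, Real.rpow_one]
    have hBq : (ε * ε ^ τ) ^ q = ε ^ s₂ * ε := by
      calc (ε * ε ^ τ) ^ q = (ε ^ (1+τ)) ^ q := by rw [e1]
        _ = ε ^ ((1+τ)*q) := (Real.rpow_mul hε0.le _ _).symm
        _ = ε ^ s₂ * ε ^ (1:ℝ) := by
            rw [← Real.rpow_add hε0]; congr 1; simp only [hs₂def]; ring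
        _ = ε ^ s₂ * ε := by rw [Real.rpow_one]
    rw [hBq]
    have h2 : lam * ε ^ s₂ ≤ c₁ := le_trans
      (mul_le_mul_of_nonneg_right hlamΛ (Real.rpow_nonneg hε0.le _)) hF3
    have h1 : lam * (ε ^ s₂ * ε) ≤ c₁ * ε := by
      calc lam * (ε ^ s₂ * ε) = (lam * ε ^ s₂) * ε := by ring
        _ ≤ c₁ * ε := mul_le_mul_of_nonneg_right h2 hε0.le
    calc ε * (inner ℝ (gradient φΩ x) (ν x) : ℝ) ≤ ε * (-c₁) :=
          mul_le_mul_of_nonneg_left hin hε0.le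
      _ = -(c₁ * ε) := by ring
      _ ≤ -(lam * (ε ^ s₂ * ε)) := neg_le_neg h1
      _ = -lam * (ε ^ s₂ * ε) := by ring
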